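/- If a tempered distribution f on ℝⁿ has quasi-asymptotics g ≢ 0 at infinity with respect to an automodel function ρ of degree α, then g is a homogeneous distribution of degree α; that is, ⟨g, φ(·/t)⟩ = t^{α+n} ⟨g, φ⟩ for all Schwartz φ and all t > 0. -/

import Mathlib

open MeasureTheory SchwartzMap Filter Topology

noncomputable section

/-- Multiplication by a nonzero scalar `t` as a continuous linear equivalence. -/
def dilEquiv {E : Type*} [NormedAddCommGroup E] [NormedSpace ℝ E] (t : ℝ) (ht : t ≠ 0) :
    E ≃L[ℝ] E :=
  { LinearEquiv.smulOfNeZero ℝ E t ht with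
    continuous_toFun := continuous_const_smul t
    continuous_invFun := continuous_const_smul t⁻¹ }

/-- Dilation `φ ↦ φ (t • ·)` on Schwartz space, `t ≠ 0`. -/
def dil {E : Type*} [NormedAddCommGroup E] [NormedSpace ℝ E] (t : ℝ) (ht : t ≠ 0) :
    𝓢(E, ℂ) →L[ℝ] 𝓢(E, ℂ) :=
  SchwartzMap.compCLMOfContinuousLinearEquiv ℝ (dilEquiv t ht)

/-- The pairing `⟨f(t·), φ⟩ = t^{-n} ⟨f, φ(·/t)⟩` (junk value `0` for `t = 0`). -/
def pairScaled (n : ℕ) (f : 𝓢(EuclideanSpace ℝ (Fin n), ℂ) →L[ℂ] ℂ) (t : ℝ)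
    (φ : 𝓢(EuclideanSpace ℝ (Fin n), ℂ)) : ℂ :=
  if ht : t ≠ 0 then ((t ^ (-(n : ℤ)) : ℝ) : ℂ) * f (dil t⁻¹ (inv_ne_zero ht) φ) else 0

lemma dil_dil {E : Type*} [NormedAddCommGroup E] [NormedSpace ℝ E] (s t : ℝ)
    (hs : s ≠ 0) (ht : t ≠ 0) (φ : 𝓢(E, ℂ)) :
    dil s hs (dil t ht φ) = dil (t * s) (mul_ne_zero ht hs) φ := by
  ext x
  show φ (t • s • x) = φ ((t * s) • x)
  rw [smul_smul]

/-- If a tempered distribution `f` has quasi-asymptotics `g ≢ 0` at infinity with respect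
to an automodel function `ρ` of degree `α`, then `g` is homogeneous of degree `α`:
`⟨g, φ(·/t)⟩ = t^{α+n} ⟨g, φ⟩` for all Schwartz `φ` and `t > 0`. -/
theorem quasiasymptotic_limit_homogeneous (n : ℕ)
    (f g : 𝓢(EuclideanSpace ℝ (Fin n), ℂ) →L[ℂ] ℂ) (ρ : ℝ → ℝ) (α : ℝ)
    (hρpos : ∀ t : ℝ, 0 < t → 0 < ρ t)
    (hρcont : ContinuousOn ρ (Set.Ioi (0 : ℝ)))
    (hauto : ∀ a : ℝ, 0 < a → Tendsto (fun t => ρ (t * a) / ρ t) atTop (𝓝 (a ^ α)))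
    (hg : g ≠ 0)
    (hqa : ∀ φ, Tendsto (fun t : ℝ => pairScaled n f t φ / ((ρ t : ℝ) : ℂ)) atTop (𝓝 (g φ))) :
    ∀ (φ : 𝓢(EuclideanSpace ℝ (Fin n), ℂ)) (t : ℝ) (ht : 0 < t),
      g (dil t⁻¹ (inv_ne_zero ht.ne') φ) = ((t ^ (α + n) : ℝ) : ℂ) * g φ := by
  intro φ t ht
  set ψ := dil t⁻¹ (inv_ne_zero ht.ne') φ with hψ
  have L1 : Tendsto (fun t' : ℝ => pairScaled n f t' ψ / ((ρ t' : ℝ) : ℂ)) atTop (𝓝 (g ψ)) :=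
    hqa ψ
  -- second limit
  have hmul : Tendsto (fun t' : ℝ => t' * t) atTop atTop :=
    tendsto_id.atTop_mul_const ht
  have L2a : Tendsto (fun t' : ℝ => pairScaled n f (t' * t) φ / ((ρ (t' * t) : ℝ) : ℂ)) atTop
      (𝓝 (g φ)) := (hqa φ).comp hmul
  have L2b : Tendsto (fun t' : ℝ => ((ρ (t' * t) / ρ t' : ℝ) : ℂ)) atTop
      (𝓝 ((t ^ α : ℝ) : ℂ)) :=
    (Complex.continuous_ofReal.tendsto _).comp (hauto t ht)
  have L2 : Tendsto (fun t' : ℝ =>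
      (((t : ℝ) ^ (n : ℤ) : ℝ) : ℂ) * (pairScaled n f (t' * t) φ / ((ρ (t' * t) : ℝ) : ℂ)) *
        ((ρ (t' * t) / ρ t' : ℝ) : ℂ)) atTop
      (𝓝 ((((t : ℝ) ^ (n : ℤ) : ℝ) : ℂ) * g φ * ((t ^ α : ℝ) : ℂ))) :=
    ((tendsto_const_nhds.mul L2a).mul L2b)
  have heq : ∀ᶠ t' : ℝ in atTop,
      (((t : ℝ) ^ (n : ℤ) : ℝ) : ℂ) * (pairScaled n f (t' * t) φ / ((ρ (t' * t) : ℝ) : ℂ)) *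
        ((ρ (t' * t) / ρ t' : ℝ) : ℂ) = pairScaled n f t' ψ / ((ρ t' : ℝ) : ℂ) := by
    filter_upwards [eventually_gt_atTop (0 : ℝ)] with t' ht'
    have htt' : t' * t ≠ 0 := mul_ne_zero ht'.ne' ht.ne'
    have hρ1 : (ρ (t' * t) : ℝ) ≠ 0 := (hρpos _ (mul_pos ht' ht)).ne'
    have hρ2 : (ρ t' : ℝ) ≠ 0 := (hρpos _ ht').ne'
    have hdil : dil t'⁻¹ (inv_ne_zero ht'.ne') ψ
        = dil (t' * t)⁻¹ (inv_ne_zero htt') φ := by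
      rw [hψ, dil_dil]
      ext x
      show φ ((t⁻¹ * t'⁻¹) • x) = φ ((t' * t)⁻¹ • x)
      rw [mul_inv_rev]
    have hreal : (t : ℝ) ^ (n : ℤ) * (t' * t) ^ (-(n : ℤ)) = t' ^ (-(n : ℤ)) := by
      rw [mul_zpow]
      simp only [zpow_neg, zpow_natCast]
      field_simp
    have key : pairScaled n f t' ψ
        = (((t : ℝ) ^ (n : ℤ) : ℝ) : ℂ) * pairScaled n f (t' * t) φ := by
      rw [pairScaled, pairScaled, dif_pos ht'.ne', dif_pos htt', hdil, ← mul_assoc,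
        ← Complex.ofReal_mul, hreal]
    rw [key]
    push_cast
    have h2 : ((ρ (t' * t) : ℝ) : ℂ) ≠ 0 := Complex.ofReal_ne_zero.mpr hρ1
    have h3 : ((ρ t' : ℝ) : ℂ) ≠ 0 := Complex.ofReal_ne_zero.mpr hρ2
    field_simp
  have L2' : Tendsto (fun t' : ℝ => pairScaled n f t' ψ / ((ρ t' : ℝ) : ℂ)) atTop
      (𝓝 ((((t : ℝ) ^ (n : ℤ) : ℝ) : ℂ) * g φ * ((t ^ α : ℝ) : ℂ))) :=
    L2.congr' heq
  have := tendsto_nhds_unique L1 L2'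
  rw [this]
  have : ((t ^ (α + n) : ℝ) : ℂ) = (((t : ℝ) ^ (n : ℤ) : ℝ) : ℂ) * ((t ^ α : ℝ) : ℂ) := by
    rw [← Complex.ofReal_mul]
    congr 1
    rw [Real.rpow_add ht, Real.rpow_natCast, zpow_natCast]
    ring
  rw [this]
  ring


end
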